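/- arXiv:1904.08435 — 4 statements merged into one kernel-verified Lean document; each statement's English description precedes it below -/
import Mathlib

section
/- For the qubit depolarising channel $D_t(\rho) = t\rho + (1-t)\mathrm{Tr}(\rho)\mathbb{I}/2$, the pair of depolarised Pauli measurements $\{D_t(M_{b|x})\}$ and $\{D_t(M_{b|z})\}$, where $M_{\pm|x}$ and $M_{\pm|z}$ are the spectral projectors of $\sigma_x$ and $\sigma_z$, is compatible whenever $t \leq 1/\sqrt{2}$. -/
open Matrix ComplexOrder

noncomputable section

def σx : Matrix (Fin 2) (Fin 2) ℂ := !![0, 1; 1, 0]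
def σz : Matrix (Fin 2) (Fin 2) ℂ := !![1, 0; 0, -1]

/-- Depolarising channel acting on a qubit effect. -/
def Dep (t : ℝ) (M : Matrix (Fin 2) (Fin 2) ℂ) : Matrix (Fin 2) (Fin 2) ℂ :=
  (t : ℂ) • M + ((1 - t : ℝ) : ℂ) • (M.trace • ((1/2 : ℂ) • (1 : Matrix (Fin 2) (Fin 2) ℂ)))

/-- the key real inequality -/
lemma key_ineq (t e f p0 q0 p1 q1 : ℝ) (h0 : 0 ≤ t) (h2 : 2 * t^2 ≤ 1)
    (he : e = 1 ∨ e = -1) (hf : f = 1 ∨ f = -1) :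
    0 ≤ (1 + f*t)/4 * (p0^2 + q0^2) + (1 - f*t)/4 * (p1^2 + q1^2)
        + (e*t)/4 * (2*(p0*p1 + q0*q1)) := by
  have hA : (0:ℝ) ≤ 1 - 2*t^2 := by linarith
  rcases he with he | he <;> rcases hf with hf | hf <;> subst he hf
  · nlinarith [sq_nonneg ((1+t)*p0 + t*p1), sq_nonneg ((1+t)*q0 + t*q1),
      mul_nonneg hA (sq_nonneg p1), mul_nonneg hA (sq_nonneg q1)]
  · nlinarith [sq_nonneg ((1+t)*p1 + t*p0), sq_nonneg ((1+t)*q1 + t*q0),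
      mul_nonneg hA (sq_nonneg p0), mul_nonneg hA (sq_nonneg q0)]
  · nlinarith [sq_nonneg ((1+t)*p0 - t*p1), sq_nonneg ((1+t)*q0 - t*q1),
      mul_nonneg hA (sq_nonneg p1), mul_nonneg hA (sq_nonneg q1)]
  · nlinarith [sq_nonneg ((1+t)*p1 - t*p0), sq_nonneg ((1+t)*q1 - t*q0),
      mul_nonneg hA (sq_nonneg p0), mul_nonneg hA (sq_nonneg q0)]

theorem depolarised_xz_compatible (t : ℝ) (h0 : 0 ≤ t) (ht : t ≤ 1 / Real.sqrt 2) :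
    ∃ G : Fin 2 → Fin 2 → Matrix (Fin 2) (Fin 2) ℂ,
      (∀ a b, (G a b).PosSemidef) ∧
      (∑ a, ∑ b, G a b = 1) ∧
      (∑ b, G 0 b = Dep t ((1/2 : ℂ) • (1 + σx))) ∧
      (∑ a, G a 0 = Dep t ((1/2 : ℂ) • (1 + σz))) := by
  have h2 : 2 * t^2 ≤ 1 := by
    have hs : (0:ℝ) < Real.sqrt 2 := Real.sqrt_pos.mpr (by norm_num)
    have : t * Real.sqrt 2 ≤ 1 := (le_div_iff₀ hs).mp ht
    nlinarith [Real.sq_sqrt (by norm_num : (0:ℝ) ≤ 2), Real.sqrt_nonneg 2,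
      mul_nonneg h0 hs.le]
  set ε : Fin 2 → ℝ := fun a => if a = 0 then 1 else -1 with hε
  refine ⟨fun a b => !![(((1 + ε b * t)/4 : ℝ) : ℂ), (((ε a * t)/4 : ℝ) : ℂ);
      (((ε a * t)/4 : ℝ) : ℂ), (((1 - ε b * t)/4 : ℝ) : ℂ)], ?_, ?_, ?_, ?_⟩
  · intro a b
    rw [Matrix.posSemidef_iff_dotProduct_mulVec]
    constructor
    · ext i j
      fin_cases i <;> fin_cases j <;>
        simp [Matrix.IsHermitian, Matrix.conjTranspose_apply]
    · intro x
      have hcalc : dotProduct (star x)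
          ((!![(((1 + ε b * t)/4 : ℝ) : ℂ), (((ε a * t)/4 : ℝ) : ℂ);
            (((ε a * t)/4 : ℝ) : ℂ), (((1 - ε b * t)/4 : ℝ) : ℂ)]) *ᵥ x)
          = ((1 + ε b * t)/4 : ℝ) * ((starRingEnd ℂ) (x 0) * x 0)
            + ((ε a * t)/4 : ℝ) * ((starRingEnd ℂ) (x 0) * x 1 + (starRingEnd ℂ) (x 1) * x 0)
            + ((1 - ε b * t)/4 : ℝ) * ((starRingEnd ℂ) (x 1) * x 1) := by
        simp [dotProduct, mulVec, Fin.sum_univ_two]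
        ring
      rw [hcalc]
      have he : ε a = 1 ∨ ε a = -1 := by fin_cases a <;> simp [hε]
      have hf : ε b = 1 ∨ ε b = -1 := by fin_cases b <;> simp [hε]
      have hkey := key_ineq t (ε a) (ε b) (x 0).re (x 0).im (x 1).re (x 1).im h0 h2 he hf
      rw [Complex.le_def]
      constructor
      · simp [Complex.add_re, Complex.mul_re, Complex.mul_im, Complex.ofReal_re,
          Complex.ofReal_im, Complex.conj_re, Complex.conj_im]
        nlinarith [hkey]
      · simp [Complex.add_im, Complex.mul_re, Complex.mul_im, Complex.ofReal_re,
          Complex.ofReal_im, Complex.conj_re, Complex.conj_im]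
        ring
  · ext i j
    fin_cases i <;> fin_cases j <;>
      simp [Fin.sum_univ_two, hε, Matrix.one_apply] <;> push_cast <;> ring
  · ext i j
    fin_cases i <;> fin_cases j <;>
      simp [Fin.sum_univ_two, Dep, σx, hε, Matrix.trace, Matrix.one_apply,
        Matrix.smul_apply, Matrix.add_apply, Matrix.diag] <;> push_cast <;> ring
  · ext i j
    fin_cases i <;> fin_cases j <;>
      simp [Fin.sum_univ_two, Dep, σz, hε, Matrix.trace, Matrix.one_apply,
        Matrix.smul_apply, Matrix.add_apply, Matrix.diag] <;> push_cast <;> ring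
end
end

section
/- The three depolarised Pauli measurements $\{D_t(M_{\pm|x})\}, \{D_t(M_{\pm|y})\}, \{D_t(M_{\pm|z})\}$ on a qubit are compatible when $t \leq 1/\sqrt{3}$. -/
open Matrix ComplexOrder

noncomputable section

lemma psd2 (p q α β : ℝ) (hp : 0 ≤ p) (hq : 0 ≤ q)
    (h : α ^ 2 + β ^ 2 ≤ p * q) :
    (!![(p : ℂ), (α : ℂ) - (β : ℂ) * Complex.I;
        (α : ℂ) + (β : ℂ) * Complex.I, (q : ℂ)]).PosSemidef := by
  set z : ℂ := (α : ℂ) - (β : ℂ) * Complex.I with hzdef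
  have hzc : (α : ℂ) + (β : ℂ) * Complex.I = (starRingEnd ℂ) z := by
    simp [hzdef, Complex.ext_iff]
  have hnz : Complex.normSq z ≤ p * q := by
    simp only [hzdef, Complex.normSq_apply]
    simp [Complex.sub_re, Complex.sub_im]
    nlinarith [h]
  rw [hzc]
  refine Matrix.posSemidef_iff_dotProduct_mulVec.mpr ⟨?_, ?_⟩
  · ext i j
    fin_cases i <;> fin_cases j <;>
      simp [Matrix.conjTranspose_apply, hzdef, Complex.ext_iff]
  · intro x
    have expand : star x ⬝ᵥ (!![(p : ℂ), z; (starRingEnd ℂ) z, (q : ℂ)]).mulVec x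
        = (p : ℂ) * ((starRingEnd ℂ) (x 0) * x 0)
          + (q : ℂ) * ((starRingEnd ℂ) (x 1) * x 1)
          + (((starRingEnd ℂ) (x 0) * z * x 1)
              + (starRingEnd ℂ) ((starRingEnd ℂ) (x 0) * z * x 1)) := by
      simp [dotProduct, Matrix.mulVec, Fin.sum_univ_two, _root_.map_mul]
      ring
    rw [expand]
    set u : ℂ := (starRingEnd ℂ) (x 0) * z * x 1 with hu
    have h1 : (starRingEnd ℂ) (x 0) * x 0 = (Complex.normSq (x 0) : ℂ) := by
      rw [Complex.normSq_eq_conj_mul_self]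
    have h2 : (starRingEnd ℂ) (x 1) * x 1 = (Complex.normSq (x 1) : ℂ) := by
      rw [Complex.normSq_eq_conj_mul_self]
    have h3 : u + (starRingEnd ℂ) u = ((2 * u.re : ℝ) : ℂ) := by
      rw [Complex.add_conj]
    rw [h1, h2, h3]
    have hcast : (p : ℂ) * (Complex.normSq (x 0) : ℂ) + (q : ℂ) * (Complex.normSq (x 1) : ℂ)
        + ((2 * u.re : ℝ) : ℂ)
        = ((p * Complex.normSq (x 0) + q * Complex.normSq (x 1) + 2 * u.re : ℝ) : ℂ) := by
      push_cast; ring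
    rw [hcast, Complex.zero_le_real]
    set A := Complex.normSq (x 0)
    set B := Complex.normSq (x 1)
    have hA : 0 ≤ A := Complex.normSq_nonneg _
    have hB : 0 ≤ B := Complex.normSq_nonneg _
    have hu2 : u.re ^ 2 ≤ p * q * A * B := by
      have h4 : u.re ^ 2 ≤ Complex.normSq u := by
        have := Complex.normSq_apply u
        nlinarith [sq_nonneg u.im]
      have h5 : Complex.normSq u = A * Complex.normSq z * B := by
        simp [hu, Complex.normSq_mul, A, B]
      nlinarith [mul_nonneg hA hB, Complex.normSq_nonneg z]
    have habs : 2 * |u.re| ≤ p * A + q * B := by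
      have hsq : (2 * |u.re|) ^ 2 ≤ (p * A + q * B) ^ 2 := by
        nlinarith [sq_abs u.re, sq_nonneg (p * A - q * B)]
      have := Real.sqrt_le_sqrt hsq
      rwa [Real.sqrt_sq (by positivity), Real.sqrt_sq (by positivity)] at this
    have := neg_abs_le u.re
    linarith

def σy : Matrix (Fin 2) (Fin 2) ℂ := !![0, -Complex.I; Complex.I, 0]
set_option maxHeartbeats 1600000 in
theorem depolarised_xyz_compatible (t : ℝ) (h0 : 0 ≤ t) (ht : t ≤ 1 / Real.sqrt 3) :
    ∃ G : Fin 2 → Fin 2 → Fin 2 → Matrix (Fin 2) (Fin 2) ℂ,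
      (∀ a b c, (G a b c).PosSemidef) ∧
      (∑ a, ∑ b, ∑ c, G a b c = 1) ∧
      (∑ b, ∑ c, G 0 b c = Dep t ((1/2 : ℂ) • (1 + σx))) ∧
      (∑ a, ∑ c, G a 0 c = Dep t ((1/2 : ℂ) • (1 + σy))) ∧
      (∑ a, ∑ b, G a b 0 = Dep t ((1/2 : ℂ) • (1 + σz))) := by
  have hs3 : (0:ℝ) < Real.sqrt 3 := Real.sqrt_pos.mpr (by norm_num)
  have ht1 : t * Real.sqrt 3 ≤ 1 := by
    rw [le_div_iff₀ hs3] at ht; linarith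
  have ht2 : 3 * t ^ 2 ≤ 1 := by
    nlinarith [Real.sq_sqrt (show (0:ℝ) ≤ 3 by norm_num), Real.sqrt_nonneg 3]
  have htle1 : t ≤ 1 := by nlinarith
  set s : Fin 2 → ℝ := ![1, -1] with hs
  refine ⟨fun a b c =>
      !![(((1 + t * s c) / 8 : ℝ) : ℂ),
         ((t * s a / 8 : ℝ) : ℂ) - ((t * s b / 8 : ℝ) : ℂ) * Complex.I;
         ((t * s a / 8 : ℝ) : ℂ) + ((t * s b / 8 : ℝ) : ℂ) * Complex.I,
         (((1 - t * s c) / 8 : ℝ) : ℂ)], ?_, ?_, ?_, ?_, ?_⟩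
  · intro a b c
    apply psd2
    · fin_cases c <;> simp [hs] <;> nlinarith
    · fin_cases c <;> simp [hs] <;> nlinarith
    · fin_cases a <;> fin_cases b <;> fin_cases c <;> simp [hs] <;> nlinarith
  · ext i j
    fin_cases i <;> fin_cases j <;>
      simp [hs, Fin.sum_univ_two, Matrix.one_apply] <;> push_cast <;> ring
  · ext i j
    fin_cases i <;> fin_cases j <;>
      simp [hs, Dep, σx, Matrix.trace, Fin.sum_univ_two, Matrix.one_apply,
        Matrix.diag] <;> push_cast <;> ring
  · ext i j
    fin_cases i <;> fin_cases j <;>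
      simp [hs, Dep, σy, Matrix.trace, Fin.sum_univ_two, Matrix.one_apply,
        Matrix.diag] <;> push_cast <;> ring
  · ext i j
    fin_cases i <;> fin_cases j <;>
      simp [hs, Dep, σz, Matrix.trace, Fin.sum_univ_two, Matrix.one_apply,
        Matrix.diag] <;> push_cast <;> ring
end
end

section
/- If a behaviour violates a quantum communication witness, it is not CC-realisable: given real coefficients $\mu_{bxy}$ and an operator $B$ on $\mathcal{H}$ satisfying $\sum_{b,x,y} \mu_{bxy}\, \rho_x\, \delta_{\mathbf{a}(y),b} \geq B$ (in the positive semidefinite order) for every function $\mathbf{a}: [m] \to [o]$, every CC-realisable behaviour $P$ satisfies $\sum_{b,x,y} \mu_{bxy} P(b|\rho_x,y) \geq \mathrm{Tr}(B)$. -/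
open Matrix ComplexOrder

noncomputable section

def IsPOVM' {d : ℕ} {ι : Type*} [Fintype ι] (N : ι → Matrix (Fin d) (Fin d) ℂ) : Prop :=
  (∀ a, (N a).PosSemidef) ∧ ∑ a, N a = 1

lemma psd_trace_nonneg' {d : ℕ} {A : Matrix (Fin d) (Fin d) ℂ} (hA : A.PosSemidef) :
    0 ≤ A.trace := by
  rw [Matrix.trace]
  apply Finset.sum_nonneg
  intro i _
  have := hA.dotProduct_mulVec_nonneg (Pi.single i 1)
  simpa [dotProduct, Matrix.mulVec, Pi.single_apply, Finset.sum_ite_eq,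
    Matrix.diag] using this

lemma psd_trace_mul_nonneg' {d : ℕ} {A C : Matrix (Fin d) (Fin d) ℂ}
    (hA : A.PosSemidef) (hC : C.PosSemidef) : 0 ≤ (A * C).trace := by
  obtain ⟨B, rfl⟩ : ∃ B : Matrix (Fin d) (Fin d) ℂ, A = Bᴴ * B := by
    open scoped MatrixOrder in
    obtain ⟨X, hX, -, hXA⟩ := CFC.exists_sqrt_of_isSelfAdjoint_of_quasispectrumRestricts
      hA.isHermitian (QuasispectrumRestricts.nnreal_of_nonneg hA.nonneg)
    exact ⟨X, by rw [← hXA, ← star_eq_conjTranspose, hX.star_eq]⟩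
  rw [Matrix.mul_assoc, Matrix.trace_mul_comm]
  exact psd_trace_nonneg' (hC.mul_mul_conjTranspose_same B)

theorem qc_witness_valid_on_cc
    {d X m o : ℕ}
    (ρ : Fin X → Matrix (Fin d) (Fin d) ℂ)
    (hρ : ∀ x, (ρ x).PosSemidef ∧ (ρ x).trace = 1)
    (μ : Fin o → Fin X → Fin m → ℝ)
    (B : Matrix (Fin d) (Fin d) ℂ)
    (hwit : ∀ g : Fin m → Fin o,
      ((∑ b, ∑ x, ∑ y, (if g y = b then (μ b x y : ℂ) else 0) • ρ x) - B).PosSemidef)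
    (P : Fin o → Fin X → Fin m → ℝ)
    (hCC : ∃ N : (Fin m → Fin o) → Matrix (Fin d) (Fin d) ℂ, IsPOVM' N ∧
      ∀ b x y, (P b x y : ℂ) =
        ∑ g : Fin m → Fin o, (ρ x * N g).trace * (if g y = b then 1 else 0)) :
    B.trace.re ≤ ∑ b, ∑ x, ∑ y, μ b x y * P b x y := by
  obtain ⟨N, ⟨hNpsd, hNsum⟩, hP⟩ := hCC
  set W : (Fin m → Fin o) → Matrix (Fin d) (Fin d) ℂ :=
    fun g => ∑ b, ∑ x, ∑ y, (if g y = b then (μ b x y : ℂ) else 0) • ρ x with hW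
  -- B.trace = ∑ g, (B * N g).trace
  have hBtr : B.trace = ∑ g : Fin m → Fin o, (B * N g).trace := by
    rw [← Matrix.trace_sum, ← Matrix.mul_sum, hNsum, Matrix.mul_one]
  -- complex inequality
  have hkey : B.trace ≤ ∑ g : Fin m → Fin o, (W g * N g).trace := by
    have h0 : 0 ≤ ∑ g : Fin m → Fin o, ((W g - B) * N g).trace :=
      Finset.sum_nonneg fun g _ => psd_trace_mul_nonneg' (hwit g) (hNpsd g)
    have hexp : ∀ g : Fin m → Fin o,
        ((W g - B) * N g).trace = (W g * N g).trace - (B * N g).trace := by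
      intro g
      rw [Matrix.sub_mul, Matrix.trace_sub]
    rw [Finset.sum_congr rfl fun g _ => hexp g, Finset.sum_sub_distrib, ← hBtr] at h0
    exact sub_nonneg.mp h0
  -- identify the complex sum with the behaviour value
  have hsum : (∑ g : Fin m → Fin o, (W g * N g).trace) =
      ∑ b, ∑ x, ∑ y, ((μ b x y : ℂ) * (P b x y : ℂ)) := by
    have hWexp : ∀ g : Fin m → Fin o, (W g * N g).trace =
        ∑ b, ∑ x, ∑ y, (if g y = b then (μ b x y : ℂ) else 0) * (ρ x * N g).trace := by
      intro g
      simp only [hW, Matrix.sum_mul, Matrix.smul_mul, Matrix.trace_sum, Matrix.trace_smul,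
        smul_eq_mul]
    calc (∑ g : Fin m → Fin o, (W g * N g).trace)
        = ∑ g : Fin m → Fin o, ∑ b, ∑ x, ∑ y,
            (if g y = b then (μ b x y : ℂ) else 0) * (ρ x * N g).trace :=
          Finset.sum_congr rfl fun g _ => hWexp g
      _ = ∑ b, ∑ g : Fin m → Fin o, ∑ x, ∑ y,
            (if g y = b then (μ b x y : ℂ) else 0) * (ρ x * N g).trace := Finset.sum_comm
      _ = ∑ b, ∑ x, ∑ g : Fin m → Fin o, ∑ y,
            (if g y = b then (μ b x y : ℂ) else 0) * (ρ x * N g).trace :=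
          Finset.sum_congr rfl fun b _ => Finset.sum_comm
      _ = ∑ b, ∑ x, ∑ y, ∑ g : Fin m → Fin o,
            (if g y = b then (μ b x y : ℂ) else 0) * (ρ x * N g).trace :=
          Finset.sum_congr rfl fun b _ => Finset.sum_congr rfl fun x _ => Finset.sum_comm
      _ = ∑ b, ∑ x, ∑ y, ((μ b x y : ℂ) * (P b x y : ℂ)) := by
          refine Finset.sum_congr rfl fun b _ => Finset.sum_congr rfl fun x _ =>
            Finset.sum_congr rfl fun y _ => ?_
          rw [hP b x y, Finset.mul_sum]
          refine Finset.sum_congr rfl fun g _ => ?_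
          split_ifs <;> ring
  rw [hsum] at hkey
  have := (Complex.le_def.mp hkey).1
  convert this using 1
  push_cast
  simp [Complex.ofReal_re]
end
end

section
/- The qubit depolarising channel $D_t(\rho) = t\rho + (1-t)\mathrm{Tr}(\rho)\mathbb{I}/2$ is a measure-and-prepare (entanglement-breaking) channel when $t \leq 1/3$: there exist a POVM $\{N_a\}$ and states $\{\sigma_a\}$ on $\mathbb{C}^2$ with $D_t(\rho) = \sum_a \mathrm{Tr}(\rho N_a) \sigma_a$ for all density operators $\rho$. -/
open Matrix ComplexOrder
noncomputable section

lemma psd_add' {A B : Matrix (Fin 2) (Fin 2) ℂ} (hA : A.PosSemidef) (hB : B.PosSemidef) :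
    (A + B).PosSemidef :=
  posSemidef_iff_dotProduct_mulVec.mpr ⟨hA.1.add hB.1, fun x => by
    simp only [add_mulVec, dotProduct_add]
    exact add_nonneg (hA.dotProduct_mulVec_nonneg x) (hB.dotProduct_mulVec_nonneg x)⟩

lemma psd_smul' {A : Matrix (Fin 2) (Fin 2) ℂ} (hA : A.PosSemidef) {c : ℂ} (hc : 0 ≤ c) :
    (c • A).PosSemidef :=
  posSemidef_iff_dotProduct_mulVec.mpr ⟨by
    have h1 : star c = c := by
      rw [Complex.star_def, Complex.conj_eq_iff_im]
      exact (Complex.le_def.1 hc).2.symm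
    rw [Matrix.IsHermitian, conjTranspose_smul, h1, hA.1]
  , fun x => by
    simp only [smul_mulVec, dotProduct_smul, smul_eq_mul]
    exact mul_nonneg hc (hA.dotProduct_mulVec_nonneg x)⟩

def Pm : Fin 6 → Matrix (Fin 2) (Fin 2) ℂ
  | 0 => !![1/2, 1/2; 1/2, 1/2]
  | 1 => !![1/2, -(1/2); -(1/2), 1/2]
  | 2 => !![1/2, -(Complex.I/2); Complex.I/2, 1/2]
  | 3 => !![1/2, Complex.I/2; -(Complex.I/2), 1/2]
  | 4 => !![1, 0; 0, 0]
  | 5 => !![0, 0; 0, 1]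

lemma smul_vv_psd (c : ℂ) (hc : 0 ≤ c) (v : Matrix (Fin 1) (Fin 2) ℂ)
    {M : Matrix (Fin 2) (Fin 2) ℂ} (h : M = c • (vᴴ * v)) : M.PosSemidef :=
  h ▸ psd_smul' (posSemidef_conjTranspose_mul_self v) hc

lemma chalf : (0:ℂ) ≤ (1/2 : ℂ) := by rw [Complex.le_def]; norm_num

lemma Pm_psd (a : Fin 6) : (Pm a).PosSemidef := by
  fin_cases a
  · exact smul_vv_psd _ chalf !![1,1] (by
      ext i j; fin_cases i <;> fin_cases j <;>
        simp [Pm, Matrix.mul_apply, Fin.sum_univ_one])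
  · exact smul_vv_psd _ chalf !![1,-1] (by
      ext i j; fin_cases i <;> fin_cases j <;>
        simp [Pm, Matrix.mul_apply, Fin.sum_univ_one])
  · exact smul_vv_psd _ chalf !![1,-Complex.I] (by
      ext i j; fin_cases i <;> fin_cases j <;>
        simp [Pm, Matrix.mul_apply, Fin.sum_univ_one] <;> ring)
  · exact smul_vv_psd _ chalf !![1,Complex.I] (by
      ext i j; fin_cases i <;> fin_cases j <;>
        simp [Pm, Matrix.mul_apply, Fin.sum_univ_one] <;> ring)
  · exact smul_vv_psd _ zero_le_one !![1,0] (by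
      ext i j; fin_cases i <;> fin_cases j <;>
        simp [Pm, Matrix.mul_apply, Fin.sum_univ_one])
  · exact smul_vv_psd _ zero_le_one !![0,1] (by
      ext i j; fin_cases i <;> fin_cases j <;>
        simp [Pm, Matrix.mul_apply, Fin.sum_univ_one])

set_option maxHeartbeats 1000000 in
theorem depolarising_measure_and_prepare (t : ℝ) (h0 : 0 ≤ t) (ht : t ≤ 1/3) :
    ∃ (n : ℕ) (N : Fin n → Matrix (Fin 2) (Fin 2) ℂ)
      (σ : Fin n → Matrix (Fin 2) (Fin 2) ℂ),
      (∀ a, (N a).PosSemidef) ∧ (∑ a, N a = 1) ∧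
      (∀ a, (σ a).PosSemidef ∧ (σ a).trace = 1) ∧
      ∀ ρ : Matrix (Fin 2) (Fin 2) ℂ, ρ.PosSemidef → ρ.trace = 1 →
        (t : ℂ) • ρ + ((1 - t : ℝ) : ℂ) •
            (ρ.trace • ((1/2 : ℂ) • (1 : Matrix (Fin 2) (Fin 2) ℂ))) =
          ∑ a, (ρ * N a).trace • σ a := by
  refine ⟨6, fun a => (1/3 : ℂ) • Pm a,
    fun a => ((3*t : ℝ) : ℂ) • Pm a + (((1-3*t)/2 : ℝ) : ℂ) • 1, ?_, ?_, ?_, ?_⟩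
  · intro a
    exact psd_smul' (Pm_psd a) (by rw [Complex.le_def]; norm_num)
  · ext i j
    fin_cases i <;> fin_cases j <;>
      simp [Fin.sum_univ_six, Pm, Matrix.one_apply] <;> ring
  · intro a
    constructor
    · refine psd_add' (psd_smul' (Pm_psd a) ?_) (psd_smul' Matrix.PosSemidef.one ?_)
      · rw [Complex.le_def]; constructor <;> simp <;> linarith
      · rw [Complex.le_def]; constructor <;> simp <;> linarith
    · fin_cases a <;>
        (simp [Matrix.trace, Pm, Fin.sum_univ_two, Matrix.one_apply, Complex.ext_iff] <;>
          push_cast <;> ring)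
  · intro ρ _ _
    simp only [Fin.sum_univ_six, Pm, Matrix.trace_fin_two]
    ext i j
    fin_cases i <;> fin_cases j <;>
      (simp [Matrix.mul_apply, Matrix.one_apply, Fin.sum_univ_two,
        Matrix.smul_apply, Matrix.add_apply, Complex.ext_iff] <;> push_cast <;> ring_nf <;> simp)
end
end
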